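/- Let N = {1, …, k} and let f : 2^N → ℝ be submodular, normalized, and increasing; take outcome set 𝒴 = 2^N, Lovász hinge L^f : ℝ^k → ℝ^{2^N}, and discrete loss ℓ^f : 2^N → ℝ^{2^N} with ℓ^f(A)_S = f(A △ S). Then the following are equivalent: (a) f is modular; (b) for every sign-consistent link ψ : ℝ^k → 2^N, the pair (L^f, ψ) is calibrated with respect to ℓ^f. -/

import Mathlib

open scoped BigOperators

/-- The probability simplex over a finite outcome set `Y`. -/
def probSimplex (Y : Type*) [Fintype Y] : Set (Y → ℝ) :=
  {p | (∀ y, 0 ≤ p y) ∧ ∑ y, p y = 1}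

/-- Expected loss `⟨p, v⟩ = ∑ y, p y * v y`. -/
def elloss {Y : Type*} [Fintype Y] (p : Y → ℝ) (v : Y → ℝ) : ℝ :=
  ∑ y, p y * v y

/-- `u` minimizes the expected loss `⟨p, L ·⟩` over the report set. -/
def Minimizes {U Y : Type*} [Fintype Y] (p : Y → ℝ) (L : U → Y → ℝ) (u : U) : Prop :=
  ∀ u' : U, elloss p (L u) ≤ elloss p (L u')

/-- The Bayes risk `inf_u ⟨p, L u⟩`. -/
noncomputable def bayesRisk {U Y : Type*} [Fintype Y] (p : Y → ℝ) (L : U → Y → ℝ) : ℝ :=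
  sInf (Set.range fun u => elloss p (L u))

/-- `(L, ψ)` is calibrated with respect to `ℓ`: for each `p` in the simplex, the infimum of
expected surrogate loss over reports linking outside `argmin ⟨p, ℓ ·⟩` is strictly greater
than the overall infimum (equivalently, exceeds it by some `ε > 0`; the condition is vacuous,
i.e. `inf ∅ = +∞`, when no report links to an incorrect prediction). -/
def Calibrated {R Y : Type*} [Fintype Y] {k : ℕ}
    (L : (Fin k → ℝ) → Y → ℝ) (ℓ : R → Y → ℝ) (ψ : (Fin k → ℝ) → R) : Prop :=
  ∀ p ∈ probSimplex Y, ∃ ε > 0, ∀ u : Fin k → ℝ,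
    ¬ Minimizes p ℓ (ψ u) → bayesRisk p L + ε ≤ elloss p (L u)

/-- A set function on `N = {1, …, k}` is submodular if
`f (S ∪ T) + f (S ∩ T) ≤ f S + f T` for all `S, T`. -/
def Submodular {k : ℕ} (f : Finset (Fin k) → ℝ) : Prop :=
  ∀ S T : Finset (Fin k), f (S ∪ T) + f (S ∩ T) ≤ f S + f T

/-- A set function is modular if `f (S ∪ T) + f (S ∩ T) = f S + f T` for all `S, T`. -/
def Modular {k : ℕ} (f : Finset (Fin k) → ℝ) : Prop :=
  ∀ S T : Finset (Fin k), f (S ∪ T) + f (S ∩ T) = f S + f T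

open Classical in
/-- The Lovász extension of a normalized set function `f`:
`F(u) = ∫₀^∞ f({i : uᵢ ≥ θ}) dθ + ∫_{−∞}^0 (f({i : uᵢ ≥ θ}) − f(N)) dθ`. -/
noncomputable def lovaszExtension {k : ℕ} (f : Finset (Fin k) → ℝ) (u : Fin k → ℝ) : ℝ :=
  (∫ θ in Set.Ioi (0 : ℝ), f (Finset.univ.filter fun i => θ ≤ u i)) +
  (∫ θ in Set.Iio (0 : ℝ), (f (Finset.univ.filter fun i => θ ≤ u i) - f Finset.univ))

/-- The `±1` indicator of `S ⊆ N` at coordinate `i`. -/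
def chi {k : ℕ} (S : Finset (Fin k)) (i : Fin k) : ℝ := if i ∈ S then 1 else -1

/-- The Lovász hinge of an increasing normalized set function `f`:
`L^f(u)_S = F((1 − u ⊙ χ_S)₊)`. -/
noncomputable def lovaszHinge {k : ℕ} (f : Finset (Fin k) → ℝ) (u : Fin k → ℝ) :
    Finset (Fin k) → ℝ :=
  fun S => lovaszExtension f (fun i => max (1 - u i * chi S i) 0)

/-- A link `ψ : ℝ^k → 2^N` is sign-consistent if `uᵢ > 0 → i ∈ ψ(u)` and
`uᵢ < 0 → i ∉ ψ(u)`. -/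
def SignConsistent {k : ℕ} (ψ : (Fin k → ℝ) → Finset (Fin k)) : Prop :=
  ∀ (u : Fin k → ℝ) (i : Fin k), (0 < u i → i ∈ ψ u) ∧ (u i < 0 → i ∉ ψ u)


open MeasureTheory Set Finset
open scoped BigOperators

variable {k : ℕ}

/-- level set -/
noncomputable def lev (v : Fin k → ℝ) (θ : ℝ) : Finset (Fin k) :=
  Finset.univ.filter fun i => θ ≤ v i

lemma mem_lev {v : Fin k → ℝ} {θ : ℝ} {i : Fin k} : i ∈ lev v θ ↔ θ ≤ v i := by
  simp [lev]

lemma measurableSet_lev_eq (v : Fin k → ℝ) (A : Finset (Fin k)) :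
    MeasurableSet {θ : ℝ | lev v θ = A} := by
  have : {θ : ℝ | lev v θ = A} = ⋂ i : Fin k, {θ | θ ≤ v i ↔ i ∈ A} := by
    ext θ
    simp only [Set.mem_setOf_eq, Set.mem_iInter, Finset.ext_iff, mem_lev]
  rw [this]
  refine MeasurableSet.iInter fun i => ?_
  by_cases hi : i ∈ A
  · have : {θ : ℝ | θ ≤ v i ↔ i ∈ A} = Set.Iic (v i) := by
      ext θ; simp [hi]
    rw [this]; exact measurableSet_Iic
  · have : {θ : ℝ | θ ≤ v i ↔ i ∈ A} = Set.Ioi (v i) := by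
      ext θ
      simp only [Set.mem_setOf_eq, hi, iff_false, not_le, Set.mem_Ioi]
    rw [this]; exact measurableSet_Ioi

lemma f_lev_repr (f : Finset (Fin k) → ℝ) (v : Fin k → ℝ) (θ : ℝ) :
    f (lev v θ) = ∑ A : Finset (Fin k),
      Set.indicator {θ' : ℝ | lev v θ' = A} (fun _ => f A) θ := by
  rw [Finset.sum_eq_single (lev v θ)]
  · rw [Set.indicator_of_mem]; exact rfl
  · intro A _ hA
    rw [Set.indicator_of_notMem]
    simp only [Set.mem_setOf_eq]
    exact fun h => hA h.symm
  · intro h; exact absurd (Finset.mem_univ _) h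

lemma integrableOn_f_lev (f : Finset (Fin k) → ℝ) (hnorm : f ∅ = 0) (v : Fin k → ℝ) :
    IntegrableOn (fun θ => f (lev v θ)) (Set.Ioi (0:ℝ)) volume := by
  have hrepr : (fun θ => f (lev v θ)) = fun θ => ∑ A : Finset (Fin k),
      Set.indicator {θ' : ℝ | lev v θ' = A} (fun _ => f A) θ := by
    funext θ; exact f_lev_repr f v θ
  rw [hrepr]
  apply MeasureTheory.integrable_finset_sum
  intro A _
  by_cases hA : A = ∅
  · subst hA
    simp [hnorm]
  · obtain ⟨i, hi⟩ := Finset.nonempty_iff_ne_empty.2 hA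
    rw [MeasureTheory.integrable_indicator_iff (measurableSet_lev_eq v A),
      MeasureTheory.integrableOn_const_iff]
    right
    rw [MeasureTheory.Measure.restrict_apply (measurableSet_lev_eq v A)]
    refine lt_of_le_of_lt (measure_mono ?_) (?_ : volume (Set.Ioc (0:ℝ) (v i)) < ⊤)
    · intro θ hθ
      obtain ⟨h1, h2⟩ := hθ
      have : θ ≤ v i := by
        have := h1; rw [Set.mem_setOf_eq] at this
        have := this ▸ hi
        exact mem_lev.1 (by rw [h1]; exact hi)
      exact ⟨h2, this⟩
    · rw [Real.volume_Ioc]; exact ENNReal.ofReal_lt_top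

lemma lovasz_eq_Ioi (f : Finset (Fin k) → ℝ) (v : Fin k → ℝ) (hv : ∀ i, 0 ≤ v i) :
    lovaszExtension f v = ∫ θ in Set.Ioi (0:ℝ), f (lev v θ) := by
  have h2 : (∫ θ in Set.Iio (0:ℝ),
      (f (Finset.univ.filter fun i => θ ≤ v i) - f Finset.univ)) = 0 := by
    rw [MeasureTheory.setIntegral_congr_fun measurableSet_Iio
      (g := fun _ => (0:ℝ))]
    · simp
    · intro θ hθ
      have : (Finset.univ.filter fun i => θ ≤ v i) = Finset.univ := by
        apply Finset.filter_true_of_mem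
        intro i _
        exact le_trans (le_of_lt hθ) (hv i)
      simp [this]
  rw [lovaszExtension, h2, add_zero]
  rfl

lemma lovasz_mono (f g : Finset (Fin k) → ℝ) (hf : f ∅ = 0) (hg : g ∅ = 0)
    (hle : ∀ A, f A ≤ g A) (v : Fin k → ℝ) (hv : ∀ i, 0 ≤ v i) :
    lovaszExtension f v ≤ lovaszExtension g v := by
  rw [lovasz_eq_Ioi f v hv, lovasz_eq_Ioi g v hv]
  apply MeasureTheory.setIntegral_mono_on (integrableOn_f_lev f hf v)
    (integrableOn_f_lev g hg v) measurableSet_Ioi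
  intro θ _
  exact hle _

lemma integral_ind_Ioc (a c : ℝ) (hc : 0 ≤ c) (b : ℝ) (hbc : b ≤ c) (hb : 0 ≤ b) :
    (∫ θ in Set.Ioi (0:ℝ), Set.indicator (Set.Ioc b c) (fun _ => a) θ) = a * (c - b) := by
  rw [MeasureTheory.integral_indicator measurableSet_Ioc,
    MeasureTheory.Measure.restrict_restrict measurableSet_Ioc]
  have : Set.Ioc b c ∩ Set.Ioi 0 = Set.Ioc b c := by
    apply Set.inter_eq_self_of_subset_left
    intro x hx
    exact lt_of_le_of_lt hb hx.1
  rw [this, MeasureTheory.setIntegral_const, Real.volume_real_Ioc, smul_eq_mul,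
    max_eq_left (by linarith : (0:ℝ) ≤ c - b), mul_comm]

lemma lovasz_modular_eval (a : Fin k → ℝ) (f : Finset (Fin k) → ℝ)
    (hf : ∀ A, f A = ∑ m ∈ A, a m) (v : Fin k → ℝ) (hv : ∀ i, 0 ≤ v i) :
    lovaszExtension f v = ∑ m, a m * v m := by
  rw [lovasz_eq_Ioi f v hv]
  rw [MeasureTheory.setIntegral_congr_fun measurableSet_Ioi
    (g := fun θ => ∑ m : Fin k, Set.indicator (Set.Ioc (0:ℝ) (v m)) (fun _ => a m) θ)]
  · rw [MeasureTheory.integral_finset_sum]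
    · refine Finset.sum_congr rfl fun m _ => ?_
      rw [integral_ind_Ioc (a m) (v m) (hv m) 0 (hv m) le_rfl, sub_zero]
    · intro m _
      rw [MeasureTheory.integrable_indicator_iff measurableSet_Ioc,
        MeasureTheory.integrableOn_const_iff]
      right
      rw [MeasureTheory.Measure.restrict_apply measurableSet_Ioc]
      exact lt_of_le_of_lt (measure_mono Set.inter_subset_left)
        (by rw [Real.volume_Ioc]; exact ENNReal.ofReal_lt_top)
  · intro θ hθ
    rw [Set.mem_Ioi] at hθ
    dsimp only
    rw [hf]
    rw [← Finset.sum_filter_add_sum_filter_not Finset.univ (fun m => θ ≤ v m)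
      (fun m => Set.indicator (Set.Ioc (0:ℝ) (v m)) (fun _ => a m) θ)]
    have h1 : ∀ m ∈ Finset.univ.filter (fun m => θ ≤ v m),
        Set.indicator (Set.Ioc (0:ℝ) (v m)) (fun _ => a m) θ = a m := by
      intro m hm
      rw [Finset.mem_filter] at hm
      exact Set.indicator_of_mem (Set.mem_Ioc.2 ⟨hθ, hm.2⟩) _
    have h2 : ∀ m ∈ Finset.univ.filter (fun m => ¬ θ ≤ v m),
        Set.indicator (Set.Ioc (0:ℝ) (v m)) (fun _ => a m) θ = 0 := by
      intro m hm
      rw [Finset.mem_filter] at hm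
      exact Set.indicator_of_notMem (fun h => hm.2 h.2) _
    rw [Finset.sum_congr rfl h1, Finset.sum_congr rfl h2, Finset.sum_const_zero, add_zero]
    exact (Finset.sum_congr (by ext m; simp [lev]) (fun _ _ => rfl)).symm

lemma lovasz_two_level_eval (f : Finset (Fin k) → ℝ) (hnorm : f ∅ = 0)
    (A B : Finset (Fin k)) (hAB : Disjoint A B) (c₁ c₂ : ℝ) (h0 : 0 ≤ c₁) (h12 : c₁ ≤ c₂)
    (v : Fin k → ℝ) (hv : ∀ m, v m = if m ∈ A then c₁ else if m ∈ B then c₂ else 0) :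
    lovaszExtension f v = c₁ * f (A ∪ B) + (c₂ - c₁) * f B := by
  have hv0 : ∀ i, 0 ≤ v i := by
    intro i; rw [hv]
    split_ifs <;> linarith
  rw [lovasz_eq_Ioi f v hv0]
  rw [MeasureTheory.setIntegral_congr_fun measurableSet_Ioi
    (g := fun θ => Set.indicator (Set.Ioc (0:ℝ) c₁) (fun _ => f (A ∪ B)) θ
      + Set.indicator (Set.Ioc c₁ c₂) (fun _ => f B) θ)]
  · rw [MeasureTheory.integral_add]
    · rw [integral_ind_Ioc _ c₁ h0 0 h0 le_rfl, integral_ind_Ioc _ c₂ (le_trans h0 h12) c₁ h12 h0,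
        sub_zero]
      ring
    · rw [MeasureTheory.integrable_indicator_iff measurableSet_Ioc,
        MeasureTheory.integrableOn_const_iff]
      right
      rw [MeasureTheory.Measure.restrict_apply measurableSet_Ioc]
      exact lt_of_le_of_lt (measure_mono Set.inter_subset_left)
        (by rw [Real.volume_Ioc]; exact ENNReal.ofReal_lt_top)
    · rw [MeasureTheory.integrable_indicator_iff measurableSet_Ioc,
        MeasureTheory.integrableOn_const_iff]
      right
      rw [MeasureTheory.Measure.restrict_apply measurableSet_Ioc]
      exact lt_of_le_of_lt (measure_mono Set.inter_subset_left)
        (by rw [Real.volume_Ioc]; exact ENNReal.ofReal_lt_top)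
  · intro θ hθ
    rw [Set.mem_Ioi] at hθ
    dsimp only
    by_cases hθ1 : θ ≤ c₁
    · have hlev : lev v θ = A ∪ B := by
        ext m
        rw [mem_lev, hv, Finset.mem_union]
        split_ifs with h h'
        · simp [h, hθ1]
        · simp [h, h', le_trans hθ1 h12]
        · simp [h, h']; linarith
      rw [hlev, Set.indicator_of_mem (Set.mem_Ioc.2 ⟨hθ, hθ1⟩), Set.indicator_of_notMem
        (fun h => (not_le.2 h.1) hθ1)]
      ring
    · push_neg at hθ1
      by_cases hθ2 : θ ≤ c₂
      · have hlev : lev v θ = B := by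
          ext m
          rw [mem_lev, hv]
          split_ifs with h h'
          · constructor
            · intro hh; linarith
            · intro hh; exact absurd hh (Finset.disjoint_left.1 hAB h)
          · simp [h', hθ2]
          · simp [h']; linarith
        rw [hlev, Set.indicator_of_notMem (fun h => (not_le.2 hθ1) h.2),
          Set.indicator_of_mem (Set.mem_Ioc.2 ⟨hθ1, hθ2⟩)]
        ring
      · push_neg at hθ2
        have hlev : lev v θ = ∅ := by
          ext m
          rw [mem_lev, hv]
          simp only [Finset.notMem_empty, iff_false]
          split_ifs with h h'
          · linarith
          · linarith
          · linarith
        rw [hlev, hnorm, Set.indicator_of_notMem (fun h => (not_lt.2 h.2) hθ1),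
          Set.indicator_of_notMem (fun h => (not_le.2 hθ2) h.2)]
        ring

lemma modular_sum (f : Finset (Fin k) → ℝ) (hnorm : f ∅ = 0)
    (hstep : ∀ (T : Finset (Fin k)) (i : Fin k), i ∉ T → f (insert i T) = f T + f {i}) :
    ∀ A : Finset (Fin k), f A = ∑ m ∈ A, f {m} := by
  intro A
  induction A using Finset.induction_on with
  | empty => simpa using hnorm
  | @insert i B hi ih =>
    rw [hstep B i hi, Finset.sum_insert hi, ih]
    ring

lemma modular_of_step (f : Finset (Fin k) → ℝ) (hnorm : f ∅ = 0)
    (hstep : ∀ (T : Finset (Fin k)) (i : Fin k), i ∉ T → f (insert i T) = f T + f {i}) :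
    Modular f := by
  intro A B
  have h := modular_sum f hnorm hstep
  rw [h A, h B, h (A ∪ B), h (A ∩ B)]
  exact Finset.sum_union_inter

lemma witness_of_not_modular (f : Finset (Fin k) → ℝ) (hsub : Submodular f)
    (hnorm : f ∅ = 0) (hmod : ¬ Modular f) :
    ∃ (T : Finset (Fin k)) (i : Fin k), i ∉ T ∧ 0 < f T + f {i} - f (insert i T) := by
  by_contra hc
  push_neg at hc
  apply hmod
  apply modular_of_step f hnorm
  intro T i hi
  have h1 := hc T i hi
  have h2 := hsub {i} T
  have hu : {i} ∪ T = insert i T := by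
    ext m; simp [Finset.mem_insert, or_comm]
  have hint : {i} ∩ T = ∅ := by
    ext m
    simp only [Finset.mem_inter, Finset.mem_singleton, Finset.notMem_empty, iff_false]
    rintro ⟨rfl, hm⟩; exact hi hm
  rw [hu, hint, hnorm] at h2
  linarith

/-- the greedy vector for `S` -/
lemma greedy_exists (f : Finset (Fin k) → ℝ) (hsub : Submodular f) (hnorm : f ∅ = 0)
    (hmono : ∀ S T : Finset (Fin k), S ⊆ T → f S ≤ f T) (S : Finset (Fin k)) :
    ∃ a : Fin k → ℝ, (∀ m, 0 ≤ a m) ∧ (∀ A, ∑ m ∈ A, a m ≤ f A) ∧ (∑ m ∈ S, a m = f S) := by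
  classical
  set P : Fin k → Finset (Fin k) := fun m => S.filter (fun x => x < m) with hP
  set a : Fin k → ℝ := fun m => if m ∈ S then f (insert m (P m)) - f (P m) else 0 with ha
  have hmP : ∀ m, m ∉ P m := by
    intro m
    simp [hP, lt_irrefl]
  have hanneg : ∀ m, 0 ≤ a m := by
    intro m
    rw [ha]
    dsimp only
    split_ifs
    · have := hmono (P m) (insert m (P m)) (Finset.subset_insert _ _)
      linarith
    · exact le_refl 0
  -- bound on subsets of S
  have hle_sub : ∀ (n : ℕ) (A : Finset (Fin k)), A.card ≤ n → A ⊆ S → ∑ m ∈ A, a m ≤ f A := by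
    intro n
    induction n with
    | zero =>
      intro A hA _
      have : A = ∅ := Finset.card_eq_zero.1 (Nat.le_zero.1 hA)
      subst this
      simp [hnorm]
    | succ n ih =>
      intro A hA hAS
      rcases Finset.eq_empty_or_nonempty A with rfl | hne
      · simp [hnorm]
      · set m := A.max' hne with hm
        have hmA : m ∈ A := A.max'_mem hne
        set A' := A.erase m with hA'
        have hsub' : A' ⊆ S := fun x hx => hAS (Finset.erase_subset _ _ hx)
        have hcard : A'.card ≤ n := by
          rw [hA', Finset.card_erase_of_mem hmA]
          omega
        have ih' := ih A' hcard hsub'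
        have hA'P : A' ⊆ P m := by
          intro x hx
          rw [hP]
          simp only [Finset.mem_filter]
          refine ⟨hsub' hx, ?_⟩
          rcases Finset.mem_erase.1 hx with ⟨hxm, hxA⟩
          exact lt_of_le_of_ne (A.le_max' x hxA) hxm
        have hkey : a m ≤ f (insert m A') - f A' := by
          rw [ha]
          dsimp only
          rw [if_pos (hAS hmA)]
          have h := hsub (insert m A') (P m)
          have hu : insert m A' ∪ P m = insert m (P m) := by
            ext x
            simp only [Finset.mem_union, Finset.mem_insert]
            constructor
            · rintro (⟨rfl | hx⟩ | hx)
              · left; rfl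
              · right; exact hA'P (by assumption)
              · right; exact hx
            · rintro (rfl | hx)
              · left; left; rfl
              · right; exact hx
          have hi : insert m A' ∩ P m = A' := by
            ext x
            simp only [Finset.mem_inter, Finset.mem_insert]
            constructor
            · rintro ⟨rfl | hx, hxP⟩
              · exact absurd hxP (hmP m)
              · exact hx
            · intro hx
              exact ⟨Or.inr hx, hA'P hx⟩
          rw [hu, hi] at h
          linarith
        have hins : insert m A' = A := Finset.insert_erase hmA
        calc ∑ x ∈ A, a x = ∑ x ∈ A', a x + a m := (Finset.sum_erase_add A a hmA).symm
          _ ≤ f A' + (f (insert m A') - f A') := by linarith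
          _ = f (insert m A') := by ring
          _ = f A := by rw [hins]
  refine ⟨a, hanneg, ?_, ?_⟩
  · intro A
    have h1 : ∑ m ∈ A, a m = ∑ m ∈ A ∩ S, a m := by
      symm
      apply Finset.sum_subset (Finset.inter_subset_left)
      intro x hxA hx
      rw [ha]
      dsimp only
      rw [if_neg]
      intro hxS
      exact hx (Finset.mem_inter.2 ⟨hxA, hxS⟩)
    rw [h1]
    calc ∑ m ∈ A ∩ S, a m ≤ f (A ∩ S) :=
          hle_sub (A ∩ S).card _ le_rfl (Finset.inter_subset_right)
      _ ≤ f A := hmono _ _ (Finset.inter_subset_left)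
  · -- prefix induction
    have hQ : ∀ j : ℕ, ∑ m ∈ S.filter (fun x : Fin k => (x : ℕ) < j), a m
        = f (S.filter (fun x : Fin k => (x : ℕ) < j)) := by
      intro j
      induction j with
      | zero => simp [hnorm]
      | succ j ih =>
        by_cases hex : ∃ m ∈ S, (m : ℕ) = j
        · obtain ⟨m, hmS, hmj⟩ := hex
          have hQj : S.filter (fun x : Fin k => (x : ℕ) < j + 1)
              = insert m (S.filter (fun x : Fin k => (x : ℕ) < j)) := by
            ext x
            simp only [Finset.mem_filter, Finset.mem_insert]
            constructor
            · rintro ⟨hxS, hxj⟩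
              by_cases hxm : x = m
              · left; exact hxm
              · right
                refine ⟨hxS, ?_⟩
                have : (x : ℕ) ≠ j := fun h => hxm (Fin.ext (by omega))
                omega
            · rintro (rfl | ⟨hxS, hxj⟩)
              · exact ⟨hmS, by omega⟩
              · exact ⟨hxS, by omega⟩
          have hmnot : m ∉ S.filter (fun x : Fin k => (x : ℕ) < j) := by
            simp only [Finset.mem_filter]
            rintro ⟨_, hlt⟩
            omega
          have hPm : P m = S.filter (fun x : Fin k => (x : ℕ) < j) := by
            rw [hP]
            apply Finset.filter_congr
            intro x _
            simp only [Fin.lt_def, hmj]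
          rw [hQj, Finset.sum_insert hmnot, ih, ha]
          dsimp only
          rw [if_pos hmS, hPm]
          ring
        · push_neg at hex
          have : S.filter (fun x : Fin k => (x : ℕ) < j + 1) = S.filter (fun x : Fin k => (x : ℕ) < j) := by
            apply Finset.filter_congr
            intro x hxS
            have := hex x hxS
            constructor <;> intro h <;> omega
          rw [this, ih]
    have hSfull : S.filter (fun x : Fin k => (x : ℕ) < k) = S := by
      apply Finset.filter_true_of_mem
      intro x _
      exact x.isLt
    have := hQ k
    rwa [hSfull] at this

lemma elloss_pair (S : Finset (Fin k)) (hS : S ≠ ∅) (v : Finset (Fin k) → ℝ) :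
    elloss (fun Y => if Y = S then (1:ℝ)/2 else if Y = ∅ then 1/2 else 0) v
      = (1/2) * v S + (1/2) * v ∅ := by
  rw [elloss, ← Finset.sum_subset (Finset.subset_univ ({S, ∅} : Finset (Finset (Fin k))))]
  · rw [Finset.sum_pair hS]
    have h1 : (∅ : Finset (Fin k)) ≠ S := Ne.symm hS
    simp [h1]
  · intro x _ hx
    simp only [Finset.mem_insert, Finset.mem_singleton] at hx
    push_neg at hx
    rw [if_neg hx.1, if_neg (Finset.nonempty_iff_ne_empty.1 hx.2), zero_mul]

lemma pair_mem_simplex (S : Finset (Fin k)) (hS : S ≠ ∅) :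
    (fun Y => if Y = S then (1:ℝ)/2 else if Y = ∅ then 1/2 else 0)
      ∈ probSimplex (Finset (Fin k)) := by
  constructor
  · intro Y
    dsimp only
    split_ifs <;> norm_num
  · have h := elloss_pair S hS (fun _ => 1)
    rw [elloss] at h
    simp only [mul_one] at h
    rw [h]; norm_num

lemma backward_direction (f : Finset (Fin k) → ℝ)
    (hsub : Submodular f) (hnorm : f ∅ = 0)
    (hmono : ∀ S T : Finset (Fin k), S ⊆ T → f S ≤ f T)
    (hcal : ∀ ψ : (Fin k → ℝ) → Finset (Fin k), SignConsistent ψ →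
        Calibrated (lovaszHinge f) (fun A S => f (symmDiff A S)) ψ) :
    Modular f := by
  classical
  by_contra hmod
  obtain ⟨T, i, hiT, hδ⟩ := witness_of_not_modular f hsub hnorm hmod
  set S := insert i T with hSdef
  set δ := f T + f {i} - f S with hδdef
  have hSne : S ≠ ∅ := Finset.insert_ne_empty _ _
  set p := fun Y : Finset (Fin k) => if Y = S then (1:ℝ)/2 else if Y = ∅ then 1/2 else 0
    with hpdef
  set ψ := fun u : Fin k → ℝ => Finset.univ.filter (fun m => 0 < u m) with hψdef
  have hψ : SignConsistent ψ := by
    intro u m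
    constructor
    · intro h
      rw [hψdef]
      exact Finset.mem_filter.2 ⟨Finset.mem_univ _, h⟩
    · intro h hmem
      rw [hψdef] at hmem
      exact absurd (Finset.mem_filter.1 hmem).2 (not_lt.2 (le_of_lt h))
  obtain ⟨ε, hε, hcal'⟩ := hcal ψ hψ p (pair_mem_simplex S hSne)
  obtain ⟨a, ha0, hale, haS⟩ := greedy_exists f hsub hnorm hmono S
  -- lower bound on the surrogate expected loss
  have hlow : ∀ u : Fin k → ℝ, f S ≤ elloss p (lovaszHinge f u) := by
    intro u
    rw [elloss_pair S hSne]
    set v1 := fun m => max (1 - u m * chi S m) 0 with hv1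
    set v2 := fun m => max (1 - u m * chi (∅ : Finset (Fin k)) m) 0 with hv2
    have hv1pos : ∀ m, 0 ≤ v1 m := fun m => le_max_right _ _
    have hv2pos : ∀ m, 0 ≤ v2 m := fun m => le_max_right _ _
    set g := fun A : Finset (Fin k) => ∑ m ∈ A, a m with hg
    have hg0 : g ∅ = 0 := Finset.sum_empty
    have hmono1 : lovaszExtension g v1 ≤ lovaszExtension f v1 :=
      lovasz_mono g f hg0 hnorm hale v1 hv1pos
    have hmono2 : lovaszExtension g v2 ≤ lovaszExtension f v2 :=
      lovasz_mono g f hg0 hnorm hale v2 hv2pos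
    have heval1 : lovaszExtension g v1 = ∑ m, a m * v1 m :=
      lovasz_modular_eval a g (fun _ => rfl) v1 hv1pos
    have heval2 : lovaszExtension g v2 = ∑ m, a m * v2 m :=
      lovasz_modular_eval a g (fun _ => rfl) v2 hv2pos
    have hkey : f S ≤ (1/2) * (∑ m, a m * v1 m) + (1/2) * (∑ m, a m * v2 m) := by
      rw [← haS]
      have h1 : ∑ m ∈ S, a m = ∑ m : Fin k, (if m ∈ S then a m else 0) := by
        rw [Finset.sum_ite_mem, Finset.univ_inter]
      rw [h1, Finset.mul_sum, Finset.mul_sum, ← Finset.sum_add_distrib]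
      apply Finset.sum_le_sum
      intro m _
      by_cases hm : m ∈ S
      · rw [if_pos hm]
        have hchi : chi S m = 1 := by rw [chi, if_pos hm]
        have e1 : v1 m = max (1 - u m) 0 := by
          rw [hv1]; dsimp only; rw [hchi, mul_one]
        have e2 : v2 m = max (1 + u m) 0 := by
          rw [hv2]; dsimp only; rw [chi, if_neg (Finset.notMem_empty m)]
          rw [show 1 - u m * (-1) = 1 + u m by ring]
        have g1 : 1 - u m ≤ v1 m := by rw [e1]; exact le_max_left _ _
        have g2 : 1 + u m ≤ v2 m := by rw [e2]; exact le_max_left _ _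
        nlinarith [mul_nonneg (ha0 m) (by linarith : (0:ℝ) ≤ v1 m + v2 m - 2)]
      · rw [if_neg hm]
        have w1 := mul_nonneg (ha0 m) (hv1pos m)
        have w2 := mul_nonneg (ha0 m) (hv2pos m)
        linarith
    have hLS : lovaszHinge f u S = lovaszExtension f v1 := rfl
    have hL0 : lovaszHinge f u ∅ = lovaszExtension f v2 := rfl
    rw [hLS, hL0]
    nlinarith [hmono1, hmono2, heval1, heval2, hkey]
  have hbayes : f S ≤ bayesRisk p (lovaszHinge f) := by
    apply le_csInf ⟨_, Set.mem_range_self 0⟩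
    rintro x ⟨u, rfl⟩
    exact hlow u
  -- the bad family
  have hδpos : 0 < δ := hδ
  clear_value δ
  set t := min (1/2) (ε / (2 * δ)) with htdef
  have ht0 : 0 < t := lt_min (by norm_num) (div_pos hε (by linarith))
  have ht1 : t ≤ 1/2 := min_le_left _ _
  clear_value t
  set w := fun m : Fin k => if m ∈ T then t else if m = i then -t else -1 with hwdef
  have hψw : ψ w = T := by
    ext m
    rw [hψdef]
    simp only [Finset.mem_filter, Finset.mem_univ, true_and, hwdef]
    by_cases h1 : m ∈ T
    · rw [if_pos h1]
      simp [h1, ht0]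
    · rw [if_neg h1]
      simp only [h1, iff_false]
      split_ifs <;> (intro hc; linarith)
  have hTS : symmDiff T S = {i} := by
    ext m
    simp only [Finset.mem_symmDiff, Finset.mem_singleton, hSdef, Finset.mem_insert]
    constructor
    · rintro (⟨hmT, hmS⟩ | ⟨hmS, hmT⟩)
      · exact absurd (Or.inr hmT) hmS
      · rcases hmS with rfl | hmT' 
        · rfl
        · exact absurd hmT' hmT
    · rintro rfl
      exact Or.inr ⟨Or.inl rfl, hiT⟩
  have hnotmin : ¬ Minimizes p (fun A Y => f (symmDiff A Y)) T := by
    intro hMin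
    have h := hMin ∅
    rw [elloss_pair S hSne, elloss_pair S hSne] at h
    simp only [hTS] at h
    have hTe : symmDiff T (∅ : Finset (Fin k)) = T := by
      simp [Finset.ext_iff, Finset.mem_symmDiff]
    have heS : symmDiff (∅ : Finset (Fin k)) S = S := by
      simp [Finset.ext_iff, Finset.mem_symmDiff]
    have hee : symmDiff (∅ : Finset (Fin k)) (∅ : Finset (Fin k)) = ∅ := by
      simp
    rw [hTe, heS, hee, hnorm] at h
    rw [hδdef] at hδpos
    linarith
  -- value of the surrogate at w
  have hval : elloss p (lovaszHinge f w) = f S + t * δ := by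
    rw [elloss_pair S hSne]
    have hdisj1 : Disjoint T ({i} : Finset (Fin k)) := by
      rw [Finset.disjoint_singleton_right]; exact hiT
    have hdisj2 : Disjoint ({i} : Finset (Fin k)) T := hdisj1.symm
    have h1 : lovaszHinge f w S
        = (1 - t) * f (T ∪ {i}) + ((1 + t) - (1 - t)) * f {i} := by
      apply lovasz_two_level_eval f hnorm T {i} hdisj1 (1 - t) (1 + t)
        (by linarith) (by linarith)
      intro m
      show max (1 - w m * chi S m) 0 = _
      rw [hwdef]
      dsimp only
      by_cases hmT : m ∈ T
      · have hmS : m ∈ S := by rw [hSdef]; exact Finset.mem_insert_of_mem hmT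
        rw [if_pos hmT, if_pos hmT, chi, if_pos hmS]
        rw [max_eq_left (by linarith)]
        ring_nf
      · rw [if_neg hmT, if_neg hmT]
        by_cases hmi : m = i
        · have hmS : m ∈ S := by rw [hSdef, hmi]; exact Finset.mem_insert_self _ _
          rw [if_pos hmi, chi, if_pos hmS, if_pos (Finset.mem_singleton.2 hmi)]
          rw [max_eq_left (by linarith)]
          ring_nf
        · have hmS : m ∉ S := by
            rw [hSdef]
            intro hc
            rcases Finset.mem_insert.1 hc with rfl | hc'
            · exact hmi rfl
            · exact hmT hc'
          rw [if_neg hmi, chi, if_neg hmS, if_neg (fun h => hmi (Finset.mem_singleton.1 h))]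
          norm_num
    have h2 : lovaszHinge f w ∅
        = (1 - t) * f ({i} ∪ T) + ((1 + t) - (1 - t)) * f T := by
      apply lovasz_two_level_eval f hnorm {i} T hdisj2 (1 - t) (1 + t)
        (by linarith) (by linarith)
      intro m
      show max (1 - w m * chi ∅ m) 0 = _
      rw [hwdef]
      dsimp only
      have hchie : chi (∅ : Finset (Fin k)) m = -1 := by
        rw [chi, if_neg (Finset.notMem_empty m)]
      rw [hchie]
      by_cases hmT : m ∈ T
      · have hmi : m ∉ ({i} : Finset (Fin k)) := by
          rw [Finset.mem_singleton]
          rintro rfl; exact hiT hmT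
        rw [if_pos hmT, if_neg hmi, if_pos hmT, max_eq_left (by linarith)]
        ring_nf
      · rw [if_neg hmT, if_neg hmT]
        by_cases hmi : m = i
        · rw [if_pos hmi, if_pos (Finset.mem_singleton.2 hmi), max_eq_left (by linarith)]
          ring_nf
        · rw [if_neg hmi, if_neg (fun h => hmi (Finset.mem_singleton.1 h))]
          norm_num
    have hTi : T ∪ {i} = S := by
      rw [hSdef, Finset.insert_eq, Finset.union_comm]
    have hiT' : {i} ∪ T = S := by
      rw [hSdef, Finset.insert_eq]
    rw [h1, h2, hTi, hiT', hδdef]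
    ring
  have hbad := hcal' w (by rw [hψw]; exact hnotmin)
  have htδ : t * δ < ε := by
    have h1 : t ≤ ε / (2 * δ) := by rw [htdef]; exact min_le_right _ _
    have h2 : t * δ ≤ (ε / (2 * δ)) * δ := by
      apply mul_le_mul_of_nonneg_right h1 (le_of_lt hδpos)
    have h3 : (ε / (2 * δ)) * δ = ε / 2 := by
      field_simp
    rw [h3] at h2
    linarith
  rw [hval] at hbad
  linarith

noncomputable def phi (q t : ℝ) : ℝ := q * max (1 - t) 0 + (1 - q) * max (1 + t) 0

lemma phi_nonneg {q : ℝ} (hq0 : 0 ≤ q) (hq1 : q ≤ 1) (t : ℝ) : 0 ≤ phi q t := by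
  have h1 : (0:ℝ) ≤ max (1 - t) 0 := le_max_right _ _
  have h2 : (0:ℝ) ≤ max (1 + t) 0 := le_max_right _ _
  have := mul_nonneg hq0 h1
  have := mul_nonneg (by linarith : (0:ℝ) ≤ 1 - q) h2
  rw [phi]; linarith

lemma phi_ge_min {q : ℝ} (hq0 : 0 ≤ q) (hq1 : q ≤ 1) (t : ℝ) :
    2 * min q (1 - q) ≤ phi q t := by
  have h1 : (0:ℝ) ≤ max (1 - t) 0 := le_max_right _ _
  have h2 : (0:ℝ) ≤ max (1 + t) 0 := le_max_right _ _
  have h1' : 1 - t ≤ max (1 - t) 0 := le_max_left _ _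
  have h2' : 1 + t ≤ max (1 + t) 0 := le_max_left _ _
  have hm0 : 0 ≤ min q (1 - q) := le_min hq0 (by linarith)
  have hmq : min q (1 - q) ≤ q := min_le_left _ _
  have hmq' : min q (1 - q) ≤ 1 - q := min_le_right _ _
  rw [phi]
  nlinarith [mul_le_mul_of_nonneg_right hmq h1, mul_le_mul_of_nonneg_right hmq' h2,
    mul_le_mul_of_nonneg_left (by linarith : (2:ℝ) ≤ max (1 - t) 0 + max (1 + t) 0) hm0]

lemma phi_one (q : ℝ) : phi q 1 = 2 * (1 - q) := by
  rw [phi]; norm_num; ring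

lemma phi_neg_one (q : ℝ) : phi q (-1) = 2 * q := by
  rw [phi]; norm_num; ring

lemma phi_ge_one_left {q t : ℝ} (hq0 : 0 ≤ q) (hq : q ≤ 1/2) (ht : 0 ≤ t) :
    1 ≤ phi q t := by
  rw [phi, max_eq_left (by linarith : (0:ℝ) ≤ 1 + t)]
  rcases le_total t 1 with h | h
  · rw [max_eq_left (by linarith : (0:ℝ) ≤ 1 - t)]
    nlinarith
  · rw [max_eq_right (by linarith : 1 - t ≤ (0:ℝ))]
    nlinarith

lemma phi_ge_one_right {q t : ℝ} (hq : 1/2 ≤ q) (hq1 : q ≤ 1) (ht : t ≤ 0) :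
    1 ≤ phi q t := by
  rw [phi, max_eq_left (by linarith : (0:ℝ) ≤ 1 - t)]
  rcases le_total (-1) t with h | h
  · rw [max_eq_left (by linarith : (0:ℝ) ≤ 1 + t)]
    nlinarith
  · rw [max_eq_right (by linarith : 1 + t ≤ (0:ℝ))]
    nlinarith

lemma sum_split_mem (p : Finset (Fin k) → ℝ) (m : Fin k) (c d : ℝ) :
    ∑ Y : Finset (Fin k), p Y * (if m ∈ Y then c else d)
      = (∑ Y ∈ Finset.univ.filter (fun Y => m ∈ Y), p Y) * c
        + (∑ Y ∈ Finset.univ.filter (fun Y => ¬ m ∈ Y), p Y) * d := by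
  rw [← Finset.sum_filter_add_sum_filter_not Finset.univ (fun Y => m ∈ Y)
    (fun Y => p Y * (if m ∈ Y then c else d)), Finset.sum_mul, Finset.sum_mul]
  congr 1
  · apply Finset.sum_congr rfl
    intro Y hY
    rw [if_pos (Finset.mem_filter.1 hY).2]
  · apply Finset.sum_congr rfl
    intro Y hY
    rw [if_neg (Finset.mem_filter.1 hY).2]

lemma forward_direction (f : Finset (Fin k) → ℝ)
    (hnorm : f ∅ = 0)
    (hmono : ∀ S T : Finset (Fin k), S ⊆ T → f S ≤ f T)
    (hmodular : Modular f) :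
    ∀ ψ : (Fin k → ℝ) → Finset (Fin k), SignConsistent ψ →
        Calibrated (lovaszHinge f) (fun A S => f (symmDiff A S)) ψ := by
  classical
  intro ψ hψ p hp
  obtain ⟨hp0, hp1⟩ := hp
  set a : Fin k → ℝ := fun m => f {m} with hadef
  have ha0 : ∀ m, 0 ≤ a m := by
    intro m
    have := hmono ∅ {m} (Finset.empty_subset _)
    rw [hnorm] at this
    exact this
  have hfa : ∀ A, f A = ∑ m ∈ A, a m := by
    apply modular_sum f hnorm
    intro T i hiT
    have h := hmodular T {i}
    have hu : T ∪ {i} = insert i T := by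
      ext m; simp [Finset.mem_insert, or_comm]
    have hint : T ∩ {i} = ∅ := by
      ext m
      simp only [Finset.mem_inter, Finset.mem_singleton, Finset.notMem_empty, iff_false]
      rintro ⟨hm, rfl⟩; exact hiT hm
    rw [hu, hint, hnorm] at h
    linarith
  set q : Fin k → ℝ := fun m => ∑ Y ∈ Finset.univ.filter (fun Y => m ∈ Y), p Y with hqdef
  have hq0 : ∀ m, 0 ≤ q m := by
    intro m
    apply Finset.sum_nonneg
    intro Y _
    exact hp0 Y
  have hqsplit : ∀ m, q m + ∑ Y ∈ Finset.univ.filter (fun Y => ¬ m ∈ Y), p Y = 1 := by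
    intro m
    rw [hqdef]
    dsimp only
    rw [Finset.sum_filter_add_sum_filter_not]
    exact hp1
  have hq1 : ∀ m, q m ≤ 1 := by
    intro m
    have h := hqsplit m
    have h2 : 0 ≤ ∑ Y ∈ Finset.univ.filter (fun Y => ¬ m ∈ Y), p Y :=
      Finset.sum_nonneg (fun Y _ => hp0 Y)
    linarith
  -- surrogate expansion
  have hsurr : ∀ u : Fin k → ℝ,
      elloss p (lovaszHinge f u) = ∑ m, a m * phi (q m) (u m) := by
    intro u
    rw [elloss]
    have hev : ∀ Y : Finset (Fin k), lovaszHinge f u Y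
        = ∑ m, a m * max (1 - u m * chi Y m) 0 :=
      fun Y => lovasz_modular_eval a f hfa _ (fun m => le_max_right _ _)
    calc ∑ Y, p Y * lovaszHinge f u Y
        = ∑ Y, ∑ m, p Y * (a m * max (1 - u m * chi Y m) 0) := by
          apply Finset.sum_congr rfl
          intro Y _
          rw [hev Y, Finset.mul_sum]
      _ = ∑ m, ∑ Y, p Y * (a m * max (1 - u m * chi Y m) 0) := Finset.sum_comm
      _ = ∑ m, a m * phi (q m) (u m) := by
          apply Finset.sum_congr rfl
          intro m _
          have hin : ∀ Y : Finset (Fin k), p Y * (a m * max (1 - u m * chi Y m) 0)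
              = p Y * (if m ∈ Y then a m * max (1 - u m) 0 else a m * max (1 + u m) 0) := by
            intro Y
            by_cases hmY : m ∈ Y
            · rw [if_pos hmY, chi, if_pos hmY, mul_one]
            · rw [if_neg hmY, chi, if_neg hmY,
                show 1 - u m * (-1) = 1 + u m from by ring]
          rw [Finset.sum_congr rfl (fun Y _ => hin Y), sum_split_mem]
          rw [phi]
          have hc := hqsplit m
          have : (∑ Y ∈ Finset.univ.filter (fun Y => ¬ m ∈ Y), p Y) = 1 - q m := by
            linarith
          rw [this]
          ring
  -- discrete expansion
  have hdisc : ∀ A : Finset (Fin k),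
      elloss p (fun Y => f (symmDiff A Y))
        = ∑ m, a m * (if m ∈ A then 1 - q m else q m) := by
    intro A
    rw [elloss]
    calc ∑ Y, p Y * f (symmDiff A Y)
        = ∑ Y, ∑ m, p Y * (if m ∈ symmDiff A Y then a m else 0) := by
          apply Finset.sum_congr rfl
          intro Y _
          rw [hfa (symmDiff A Y)]
          rw [show (∑ m ∈ symmDiff A Y, a m)
            = ∑ m : Fin k, (if m ∈ symmDiff A Y then a m else 0) by
              rw [Finset.sum_ite_mem, Finset.univ_inter], Finset.mul_sum]
      _ = ∑ m, ∑ Y, p Y * (if m ∈ symmDiff A Y then a m else 0) := Finset.sum_comm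
      _ = ∑ m, a m * (if m ∈ A then 1 - q m else q m) := by
          apply Finset.sum_congr rfl
          intro m _
          have hin : ∀ Y : Finset (Fin k), p Y * (if m ∈ symmDiff A Y then a m else 0)
              = p Y * (if m ∈ Y then (if m ∈ A then 0 else a m)
                  else (if m ∈ A then a m else 0)) := by
            intro Y
            by_cases hmY : m ∈ Y <;> by_cases hmA : m ∈ A <;>
              simp [hmY, hmA, Finset.mem_symmDiff]
          rw [Finset.sum_congr rfl (fun Y _ => hin Y), sum_split_mem]
          have hc := hqsplit m
          have h2 : (∑ Y ∈ Finset.univ.filter (fun Y => ¬ m ∈ Y), p Y) = 1 - q m := by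
            linarith
          rw [h2]
          by_cases hmA : m ∈ A
          · rw [if_pos hmA, if_pos hmA, if_pos hmA]
            ring
          · rw [if_neg hmA, if_neg hmA, if_neg hmA]
            ring
  set μ : Fin k → ℝ := fun m => min (q m) (1 - q m) with hμdef
  have hpoint : ∀ (A : Finset (Fin k)) (m : Fin k),
      a m * μ m ≤ a m * (if m ∈ A then 1 - q m else q m) := by
    intro A m
    apply mul_le_mul_of_nonneg_left _ (ha0 m)
    by_cases hmA : m ∈ A
    · rw [if_pos hmA]; exact min_le_right _ _
    · rw [if_neg hmA]; exact min_le_left _ _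
  have hAstar : elloss p (fun Y => f (symmDiff (Finset.univ.filter (fun m => 1/2 < q m)) Y))
      = ∑ m, a m * μ m := by
    rw [hdisc]
    apply Finset.sum_congr rfl
    intro m _
    congr 1
    simp only [Finset.mem_filter, Finset.mem_univ, true_and]
    by_cases hm : 1/2 < q m
    · rw [if_pos hm, hμdef]
      dsimp only
      rw [min_eq_right (by linarith)]
    · rw [if_neg hm, hμdef]
      dsimp only
      rw [min_eq_left (by push_neg at hm; linarith)]
  -- characterization of minimizers
  have hminchar : ∀ A : Finset (Fin k),
      Minimizes p (fun A Y => f (symmDiff A Y)) A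
        ↔ ∀ m, a m * (if m ∈ A then 1 - q m else q m) = a m * μ m := by
    intro A
    constructor
    · intro hMin
      have h1 : elloss p (fun Y => f (symmDiff A Y))
          ≤ elloss p (fun Y => f (symmDiff (Finset.univ.filter (fun m => 1/2 < q m)) Y)) :=
        hMin (Finset.univ.filter (fun m => 1/2 < q m))
      rw [hAstar, hdisc] at h1
      have h2 : ∑ m, a m * μ m ≤ ∑ m, a m * (if m ∈ A then 1 - q m else q m) :=
        Finset.sum_le_sum (fun m _ => hpoint A m)
      have h3 : ∑ m, a m * μ m = ∑ m, a m * (if m ∈ A then 1 - q m else q m) :=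
        le_antisymm h2 h1
      have h4 := (Finset.sum_eq_sum_iff_of_le (fun m _ => hpoint A m)).1 h3
      intro m
      exact (h4 m (Finset.mem_univ m)).symm
    · intro hall A'
      show elloss p (fun Y => f (symmDiff A Y)) ≤ elloss p (fun Y => f (symmDiff A' Y))
      rw [hdisc, hdisc]
      calc ∑ m, a m * (if m ∈ A then 1 - q m else q m)
          = ∑ m, a m * μ m := by
            apply Finset.sum_congr rfl
            intro m _
            exact hall m
        _ ≤ ∑ m, a m * (if m ∈ A' then 1 - q m else q m) :=
            Finset.sum_le_sum (fun m _ => hpoint A' m)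
  -- Bayes risk upper bound
  set B := ∑ m, a m * (2 * μ m) with hBdef
  have hu0 : elloss p (lovaszHinge f (fun m => if 1/2 < q m then 1 else -1)) = B := by
    rw [hsurr, hBdef]
    apply Finset.sum_congr rfl
    intro m _
    congr 1
    by_cases hm : 1/2 < q m
    · rw [if_pos hm, phi_one, hμdef]
      dsimp only
      rw [min_eq_right (by linarith)]
    · rw [if_neg hm, phi_neg_one, hμdef]
      dsimp only
      rw [min_eq_left (by push_neg at hm; linarith)]
  have hBdd : BddBelow (Set.range fun u => elloss p (lovaszHinge f u)) := by
    refine ⟨0, ?_⟩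
    rintro x ⟨u, rfl⟩
    show 0 ≤ elloss p (lovaszHinge f u)
    rw [hsurr]
    apply Finset.sum_nonneg
    intro m _
    exact mul_nonneg (ha0 m) (phi_nonneg (hq0 m) (hq1 m) _)
  have hbayesB : bayesRisk p (lovaszHinge f) ≤ B :=
    csInf_le hBdd ⟨_, hu0⟩
  -- the bad set
  set D := Finset.univ.filter (fun m => a m * |1 - 2 * q m| ≠ 0) with hDdef
  -- helper: from non-minimizing, get a bad coordinate
  have hbadcoord : ∀ u : Fin k → ℝ, ¬ Minimizes p (fun A Y => f (symmDiff A Y)) (ψ u) →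
      ∃ m, m ∈ D ∧ 1 ≤ phi (q m) (u m) := by
    intro u hnm
    rw [hminchar] at hnm
    push_neg at hnm
    obtain ⟨m, hm⟩ := hnm
    have hstrict : a m * μ m < a m * (if m ∈ ψ u then 1 - q m else q m) :=
      lt_of_le_of_ne (hpoint (ψ u) m) (Ne.symm hm)
    have hane : a m ≠ 0 := by
      intro h0
      rw [h0, zero_mul, zero_mul] at hstrict
      exact lt_irrefl 0 hstrict
    have hapos : 0 < a m := lt_of_le_of_ne (ha0 m) (Ne.symm hane)
    by_cases hmψ : m ∈ ψ u
    · rw [if_pos hmψ] at hstrict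
      have hμlt : μ m < 1 - q m := lt_of_mul_lt_mul_left hstrict (ha0 m)
      have hqlt : q m < 1/2 := by
        rw [hμdef] at hμlt
        dsimp only at hμlt
        rcases le_total (q m) (1 - q m) with h | h
        · rw [min_eq_left h] at hμlt; linarith
        · rw [min_eq_right h] at hμlt; linarith
      have hum : 0 ≤ u m := by
        by_contra hneg
        push_neg at hneg
        exact (hψ u m).2 hneg hmψ
      refine ⟨m, ?_, phi_ge_one_left (hq0 m) (by linarith) hum⟩
      rw [hDdef]
      refine Finset.mem_filter.2 ⟨Finset.mem_univ _, ?_⟩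
      have : |1 - 2 * q m| = 1 - 2 * q m := abs_of_pos (by linarith)
      rw [this]
      exact ne_of_gt (mul_pos hapos (by linarith))
    · rw [if_neg hmψ] at hstrict
      have hμlt : μ m < q m := lt_of_mul_lt_mul_left hstrict (ha0 m)
      have hqgt : 1/2 < q m := by
        rw [hμdef] at hμlt
        dsimp only at hμlt
        rcases le_total (q m) (1 - q m) with h | h
        · rw [min_eq_left h] at hμlt; linarith
        · rw [min_eq_right h] at hμlt; linarith
      have hum : u m ≤ 0 := by
        by_contra hpos
        push_neg at hpos
        exact hmψ ((hψ u m).1 hpos)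
      refine ⟨m, ?_, phi_ge_one_right (by linarith) (hq1 m) hum⟩
      rw [hDdef]
      refine Finset.mem_filter.2 ⟨Finset.mem_univ _, ?_⟩
      have : |1 - 2 * q m| = -(1 - 2 * q m) := abs_of_neg (by linarith)
      rw [this]
      exact ne_of_gt (mul_pos hapos (by linarith))
  -- lower bound on surrogate loss at bad points
  have hlower : ∀ (u : Fin k → ℝ) (m : Fin k), m ∈ D → 1 ≤ phi (q m) (u m) →
      B + a m * |1 - 2 * q m| ≤ elloss p (lovaszHinge f u) := by
    intro u m hmD hφ
    rw [hsurr]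
    have hident : 2 * μ m + |1 - 2 * q m| = 1 := by
      rw [hμdef]
      dsimp only
      rcases le_total (q m) (1 - q m) with h | h
      · rw [min_eq_left h, abs_of_nonneg (by linarith)]
        ring
      · rw [min_eq_right h, abs_of_nonpos (by linarith)]
        ring
    calc B + a m * |1 - 2 * q m|
        = ∑ j, (a j * (2 * μ j) + if j = m then a m * |1 - 2 * q m| else 0) := by
          rw [Finset.sum_add_distrib, Finset.sum_ite_eq' Finset.univ m
            (fun _ => a m * |1 - 2 * q m|), if_pos (Finset.mem_univ m), hBdef]
      _ ≤ ∑ j, a j * phi (q j) (u j) := by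
          apply Finset.sum_le_sum
          intro j _
          by_cases hj : j = m
          · subst hj
            rw [if_pos rfl, ← mul_add, hident, mul_one]
            exact le_mul_of_one_le_right (ha0 j) hφ
          · rw [if_neg hj, add_zero]
            exact mul_le_mul_of_nonneg_left (phi_ge_min (hq0 j) (hq1 j) _) (ha0 j)
  -- assemble
  rcases Finset.eq_empty_or_nonempty D with hDe | hDne
  · refine ⟨1, one_pos, ?_⟩
    intro u hnm
    obtain ⟨m, hmD, _⟩ := hbadcoord u hnm
    rw [hDe] at hmD
    exact absurd hmD (Finset.notMem_empty m)
  · refine ⟨D.inf' hDne (fun m => a m * |1 - 2 * q m|), ?_, ?_⟩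
    · show 0 < D.inf' hDne (fun m => a m * |1 - 2 * q m|)
      apply (Finset.lt_inf'_iff hDne).2
      intro m hm
      rw [hDdef] at hm
      have hne : a m * |1 - 2 * q m| ≠ 0 := (Finset.mem_filter.1 hm).2
      have hge : 0 ≤ a m * |1 - 2 * q m| := mul_nonneg (ha0 m) (abs_nonneg _)
      exact lt_of_le_of_ne hge (Ne.symm hne)
    · intro u hnm
      obtain ⟨m, hmD, hφ⟩ := hbadcoord u hnm
      have h1 := hlower u m hmD hφ
      have h2 : D.inf' hDne (fun m => a m * |1 - 2 * q m|) ≤ a m * |1 - 2 * q m| :=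
        Finset.inf'_le _ hmD
      linarith

/-- For submodular, normalized, increasing `f`, the Lovász hinge `L^f` with
the discrete loss `ℓ^f(A)_S = f(A △ S)` is calibrated for every sign-consistent link iff `f`
is modular. -/
theorem lovaszHinge_calibrated_iff_modular
    {k : ℕ} (f : Finset (Fin k) → ℝ)
    (hsub : Submodular f) (hnorm : f ∅ = 0)
    (hmono : ∀ S T : Finset (Fin k), S ⊆ T → f S ≤ f T) :
    Modular f ↔
      ∀ ψ : (Fin k → ℝ) → Finset (Fin k), SignConsistent ψ →
        Calibrated (lovaszHinge f) (fun A S => f (symmDiff A S)) ψ := by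
  constructor
  · intro hmodular
    exact forward_direction f hnorm hmono hmodular
  · intro hcal
    exact backward_direction f hsub hnorm hmono hcal
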